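/- With $\mathfrak{g}$, $\mathfrak{t}$, $F$ as above (self-adjoint, image in $\mathfrak{t}$, vanishing on $\mathfrak{t}^\perp$), for all $y \in \mathfrak{g}$ and $s \in \mathbb{R}$ one has $F \circ e^{s\,\mathrm{ad}_{Fy}} = F$, where $e^{s\,\mathrm{ad}_{Fy}}$ denotes the operator exponential of $s\,\mathrm{ad}_{Fy}$. -/

import Mathlib

open scoped RealInnerProductSpace

theorem F_comp_exp_ad_Fy_eq_F
    {g : Type*} [NormedAddCommGroup g] [InnerProductSpace ℝ g] [FiniteDimensional ℝ g]
    (l : g →ₗ[ℝ] g →ₗ[ℝ] g)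
    (hlalt : ∀ X : g, l X X = 0)
    (hljac : ∀ X Y Z : g, l X (l Y Z) = l (l X Y) Z + l Y (l X Z))
    (hinv : ∀ X Y Z : g, ⟪l X Y, Z⟫ + ⟪Y, l X Z⟫ = 0)
    (t : Submodule ℝ g)
    (htsub : ∀ A ∈ t, ∀ B ∈ t, l A B ∈ t)
    (habelian : ∀ A ∈ t, ∀ B ∈ t, l A B = 0)
    (F : g →ₗ[ℝ] g)
    (hFsa : ∀ v w : g, ⟪F v, w⟫ = ⟪v, F w⟫)
    (hFim : ∀ v : g, F v ∈ t)
    (hFperp : ∀ v ∈ tᗮ, F v = 0)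
    (y : g) (s : ℝ) :
    ∀ V : g,
      F (NormedSpace.exp (s • LinearMap.toContinuousLinearMap (l (F y))) V) = F V := by
  intro V
  set A : g →L[ℝ] g := s • LinearMap.toContinuousLinearMap (l (F y)) with hA
  have hkey : ∀ w : g, F (A w) = 0 := by
    intro w
    have hmem : l (F y) w ∈ tᗮ := by
      intro B hB
      have h1 : l (F y) B = 0 := habelian _ (hFim y) _ hB
      have h2 := hinv (F y) w B
      rw [h1] at h2
      simp only [inner_zero_right, add_zero] at h2
      rw [real_inner_comm]
      exact h2
    have h0 : F (l (F y) w) = 0 := hFperp _ hmem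
    simp [hA, h0]
  have hpow : ∀ n : ℕ, 1 ≤ n → F ((A ^ n) V) = 0 := by
    intro n hn
    obtain ⟨m, rfl⟩ := Nat.exists_eq_add_of_le hn
    rw [pow_add, pow_one]
    exact hkey _
  have hsum : Summable fun n : ℕ => ((Nat.factorial n : ℝ)⁻¹) • A ^ n :=
    NormedSpace.expSeries_summable' (𝕂 := ℝ) A
  have happly : NormedSpace.exp A V = ∑' n : ℕ, (((Nat.factorial n : ℝ)⁻¹) • A ^ n) V := by
    rw [NormedSpace.exp_eq_tsum (𝕂 := ℝ)]
    exact (ContinuousLinearMap.apply ℝ g V).map_tsum hsum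
  have hsum2 : Summable fun n : ℕ => (((Nat.factorial n : ℝ)⁻¹) • A ^ n) V :=
    hsum.map (ContinuousLinearMap.apply ℝ g V) (ContinuousLinearMap.apply ℝ g V).continuous
  have hFc : F (∑' n : ℕ, (((Nat.factorial n : ℝ)⁻¹) • A ^ n) V)
      = ∑' n : ℕ, F ((((Nat.factorial n : ℝ)⁻¹) • A ^ n) V) :=
    (LinearMap.toContinuousLinearMap F).map_tsum hsum2
  rw [happly, hFc]
  rw [tsum_eq_single 0]
  · simp
  · intro n hn
    have hn1 : 1 ≤ n := Nat.one_le_iff_ne_zero.mpr hn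
    simp only [ContinuousLinearMap.smul_apply, map_smul, hpow n hn1, smul_zero]
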